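/- For every n ≥ 1, α(n)·γ(n)^3·(1 − α(n))^2 / (32·β(n)^3 + γ(n)^3) < β(n+1) − 1 < γ(n)^3·(1 − α(n))^2 / 32. -/

import Mathlib

/-- One step of the recursion for the ice-model boundary counts
`(pa, pb, pc, pd)` on the Sierpinski gasket `SG(n)`. -/
def iceStep : ℕ × ℕ × ℕ × ℕ → ℕ × ℕ × ℕ × ℕ
  | (a, b, c, d) =>
    ((a + b) ^ 2 * (a + 3 * c + d),
     (a + b) ^ 2 * (b + 3 * c + d),
     a ^ 2 * b + b ^ 2 * a + (3 * c + d) ^ 3,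
     a ^ 3 + b ^ 3 + (3 * c + d) ^ 3)

/-- The quadruple `(pa(n), pb(n), pc(n), pd(n))`. -/
def iceSeq : ℕ → ℕ × ℕ × ℕ × ℕ
  | 0 => (0, 1, 0, 1)
  | n + 1 => iceStep (iceSeq n)

def pa (n : ℕ) : ℕ := (iceSeq n).1
def pb (n : ℕ) : ℕ := (iceSeq n).2.1
def pc (n : ℕ) : ℕ := (iceSeq n).2.2.1
def pd (n : ℕ) : ℕ := (iceSeq n).2.2.2

noncomputable def alphaSeq (n : ℕ) : ℝ := (pa n : ℝ) / (pb n : ℝ)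
noncomputable def betaSeq (n : ℕ) : ℝ := (pd n : ℝ) / (pc n : ℝ)
noncomputable def gammaSeq (n : ℕ) : ℝ := (pb n : ℝ) / (pc n : ℝ)

lemma ice_facts : ∀ n : ℕ, 1 ≤ n →
    1 ≤ pa n ∧ pa n < pb n ∧ 1 ≤ pc n ∧ pc n < pd n := by
  intro n hn
  induction n with
  | zero => omega
  | succ m ih =>
    rcases Nat.eq_or_lt_of_le hn with h | h
    · have hm0 : m = 0 := by omega
      subst hm0
      decide
    · have hm : 1 ≤ m := Nat.lt_succ_iff.mp h
      obtain ⟨ha, hab, hc, hcd⟩ := ih hm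
      have ha' : pa (m + 1) = (pa m + pb m) ^ 2 * (pa m + 3 * pc m + pd m) := rfl
      have hb' : pb (m + 1) = (pa m + pb m) ^ 2 * (pb m + 3 * pc m + pd m) := rfl
      have hc' : pc (m + 1) = (pa m) ^ 2 * pb m + (pb m) ^ 2 * pa m + (3 * pc m + pd m) ^ 3 := rfl
      have hd' : pd (m + 1) = (pa m) ^ 3 + (pb m) ^ 3 + (3 * pc m + pd m) ^ 3 := rfl
      have hsq : 0 < (pa m + pb m) ^ 2 := by positivity
      refine ⟨?_, ?_, ?_, ?_⟩
      · rw [ha']; exact Nat.one_le_iff_ne_zero.mpr (by positivity)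
      · rw [ha', hb']
        exact mul_lt_mul_of_pos_left (by omega) hsq
      · rw [hc']; exact Nat.one_le_iff_ne_zero.mpr (by positivity)
      · rw [hc', hd']
        have : (pa m) ^ 2 * pb m + (pb m) ^ 2 * pa m < (pa m) ^ 3 + (pb m) ^ 3 := by
          obtain ⟨k, hk⟩ : ∃ k, pb m = pa m + (k + 1) := ⟨pb m - pa m - 1, by omega⟩
          rw [hk]
          have h1 : 1 ≤ (k + 1) ^ 3 := Nat.one_le_iff_ne_zero.mpr (by positivity)
          nlinarith [ha, h1]
        omega

set_option maxHeartbeats 1600000 in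
theorem stmt_3 (n : ℕ) (hn : 1 ≤ n) :
    alphaSeq n * gammaSeq n ^ 3 * (1 - alphaSeq n) ^ 2 /
        (32 * betaSeq n ^ 3 + gammaSeq n ^ 3) < betaSeq (n + 1) - 1 ∧
    betaSeq (n + 1) - 1 < gammaSeq n ^ 3 * (1 - alphaSeq n) ^ 2 / 32 := by
  obtain ⟨ha, hab, hc, hcd⟩ := ice_facts n hn
  obtain ⟨⟨a, b, c, d⟩, hq⟩ : ∃ q, iceSeq n = q := ⟨_, rfl⟩
  have hA : pa n = a := by rw [pa, hq]
  have hB : pb n = b := by rw [pb, hq]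
  have hC : pc n = c := by rw [pc, hq]
  have hD : pd n = d := by rw [pd, hq]
  rw [hA] at ha
  rw [hA, hB] at hab
  rw [hC] at hc
  rw [hC, hD] at hcd
  have hcn : pc (n + 1) = a ^ 2 * b + b ^ 2 * a + (3 * c + d) ^ 3 := by
    show (iceStep (iceSeq n)).2.2.1 = _
    rw [hq]
    rfl
  have hdn : pd (n + 1) = a ^ 3 + b ^ 3 + (3 * c + d) ^ 3 := by
    show (iceStep (iceSeq n)).2.2.2 = _
    rw [hq]
    rfl
  have halpha : alphaSeq n = (a : ℝ) / (b : ℝ) := by rw [alphaSeq, hA, hB]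
  have hbeta : betaSeq n = (d : ℝ) / (c : ℝ) := by rw [betaSeq, hC, hD]
  have hgamma : gammaSeq n = (b : ℝ) / (c : ℝ) := by rw [gammaSeq, hB, hC]
  have hbeta1 : betaSeq (n + 1) = (pd (n + 1) : ℝ) / (pc (n + 1) : ℝ) := rfl
  have hA1 : (1 : ℝ) ≤ (a : ℝ) := by exact_mod_cast ha
  have hAB : (a : ℝ) < (b : ℝ) := by exact_mod_cast hab
  have hC1 : (1 : ℝ) ≤ (c : ℝ) := by exact_mod_cast hc
  have hCD : (c : ℝ) < (d : ℝ) := by exact_mod_cast hcd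
  have hApos : (0 : ℝ) < (a : ℝ) := by linarith
  have hBpos : (0 : ℝ) < (b : ℝ) := by linarith
  have hCpos : (0 : ℝ) < (c : ℝ) := by linarith
  have hDpos : (0 : ℝ) < (d : ℝ) := by linarith
  have hB0 : (b : ℝ) ≠ 0 := ne_of_gt hBpos
  have hC0 : (c : ℝ) ≠ 0 := ne_of_gt hCpos
  have hCE : (pc (n + 1) : ℝ)
      = (a : ℝ) ^ 2 * b + (b : ℝ) ^ 2 * a + (3 * (c : ℝ) + d) ^ 3 := by
    rw [hcn]; push_cast; ring
  have hDE : (pd (n + 1) : ℝ) = (a : ℝ) ^ 3 + (b : ℝ) ^ 3 + (3 * (c : ℝ) + d) ^ 3 := by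
    rw [hdn]; push_cast; ring
  have hEpos : (0 : ℝ) < (a : ℝ) ^ 2 * b + (b : ℝ) ^ 2 * a + (3 * (c : ℝ) + d) ^ 3 := by
    have t1 : (0 : ℝ) < (a : ℝ) ^ 2 * b := mul_pos (pow_pos hApos 2) hBpos
    have t2 : (0 : ℝ) < (b : ℝ) ^ 2 * a := mul_pos (pow_pos hBpos 2) hApos
    have t3 : (0 : ℝ) < (3 * (c : ℝ) + d) ^ 3 := pow_pos (by linarith) 3
    linarith
  have hE0 : (a : ℝ) ^ 2 * b + (b : ℝ) ^ 2 * a + (3 * (c : ℝ) + d) ^ 3 ≠ 0 := ne_of_gt hEpos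
  have hmid : betaSeq (n + 1) - 1 = ((a : ℝ) + b) * ((b : ℝ) - a) ^ 2 /
      ((a : ℝ) ^ 2 * b + (b : ℝ) ^ 2 * a + (3 * (c : ℝ) + d) ^ 3) := by
    rw [hbeta1, hDE, hCE]
    field_simp
    ring
  have hden1 : (0 : ℝ) < 32 * betaSeq n ^ 3 + gammaSeq n ^ 3 := by
    rw [hbeta, hgamma]
    have t1 : (0 : ℝ) < ((d : ℝ) / c) ^ 3 := pow_pos (div_pos hDpos hCpos) 3
    have t2 : (0 : ℝ) < ((b : ℝ) / c) ^ 3 := pow_pos (div_pos hBpos hCpos) 3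
    linarith
  have hden2 : (0 : ℝ) < 32 * (d : ℝ) ^ 3 + (b : ℝ) ^ 3 := by
    have := pow_pos hDpos 3
    have := pow_pos hBpos 3
    linarith
  have hL : alphaSeq n * gammaSeq n ^ 3 * (1 - alphaSeq n) ^ 2 /
      (32 * betaSeq n ^ 3 + gammaSeq n ^ 3)
      = (a : ℝ) * ((b : ℝ) - a) ^ 2 / (32 * (d : ℝ) ^ 3 + (b : ℝ) ^ 3) := by
    rw [div_eq_div_iff (ne_of_gt hden1) (ne_of_gt hden2), halpha, hbeta, hgamma]
    field_simp
  have hR : gammaSeq n ^ 3 * (1 - alphaSeq n) ^ 2 / 32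
      = (b : ℝ) * ((b : ℝ) - a) ^ 2 / (32 * (c : ℝ) ^ 3) := by
    rw [halpha, hgamma]
    field_simp
  have hBA2 : (0 : ℝ) < ((b : ℝ) - a) ^ 2 := by
    have h0 : (b : ℝ) - a ≠ 0 := by intro h0; nlinarith
    positivity
  have hCD3 : (c : ℝ) ^ 3 < (d : ℝ) ^ 3 := by
    nlinarith [mul_pos hCpos hCpos, mul_pos hDpos hDpos, mul_pos hCpos hDpos]
  have hCD2 : (c : ℝ) ^ 2 < (d : ℝ) ^ 2 := by nlinarith
  have h64 : (3 * (c : ℝ) + d) ^ 3 < 64 * (d : ℝ) ^ 3 := by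
    have k2 : (c : ℝ) ^ 2 * d < (d : ℝ) ^ 2 * d := mul_lt_mul_of_pos_right hCD2 hDpos
    have k3 : (c : ℝ) * (d : ℝ) ^ 2 < (d : ℝ) * (d : ℝ) ^ 2 :=
      mul_lt_mul_of_pos_right hCD (pow_pos hDpos 2)
    linarith [hCD3, k2, k3]
  have h64' : 64 * (c : ℝ) ^ 3 < (3 * (c : ℝ) + d) ^ 3 := by
    have l2 : (c : ℝ) ^ 2 * c < (c : ℝ) ^ 2 * d := mul_lt_mul_of_pos_left hCD (pow_pos hCpos 2)
    have l3 : (c : ℝ) * (c : ℝ) ^ 2 < (c : ℝ) * (d : ℝ) ^ 2 := mul_lt_mul_of_pos_left hCD2 hCpos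
    linarith [hCD3, l2, l3]
  constructor
  · rw [hmid, hL, div_lt_div_iff₀ hden2 hEpos]
    have p1 : (a : ℝ) ^ 2 < (b : ℝ) ^ 2 := by nlinarith
    have m1 : (a : ℝ) ^ 2 * ((b : ℝ) * ((a : ℝ) + b)) < (b : ℝ) ^ 2 * ((b : ℝ) * ((a : ℝ) + b)) :=
      mul_lt_mul_of_pos_right p1 (mul_pos hBpos (by linarith))
    have m2 : (a : ℝ) * (3 * (c : ℝ) + d) ^ 3 < (a : ℝ) * (64 * (d : ℝ) ^ 3) :=
      mul_lt_mul_of_pos_left h64 hApos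
    have m3 : 64 * (a : ℝ) * (d : ℝ) ^ 3 < 32 * ((a : ℝ) + b) * (d : ℝ) ^ 3 :=
      mul_lt_mul_of_pos_right (by linarith) (pow_pos hDpos 3)
    have key : (a : ℝ) * ((a : ℝ) ^ 2 * b + (b : ℝ) ^ 2 * a + (3 * (c : ℝ) + d) ^ 3) <
        ((a : ℝ) + b) * (32 * (d : ℝ) ^ 3 + (b : ℝ) ^ 3) := by linarith [m1, m2, m3]
    linarith [mul_lt_mul_of_pos_left key hBA2]
  · have h32C : (0 : ℝ) < 32 * (c : ℝ) ^ 3 := by nlinarith [pow_pos hCpos 3]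
    rw [hmid, hR, div_lt_div_iff₀ hEpos h32C]
    have q1 : (b : ℝ) * (64 * (c : ℝ) ^ 3) < (b : ℝ) * (3 * (c : ℝ) + d) ^ 3 :=
      mul_lt_mul_of_pos_left h64' hBpos
    have q2 : ((a : ℝ) + b) * (32 * (c : ℝ) ^ 3) < 2 * (b : ℝ) * (32 * (c : ℝ) ^ 3) :=
      mul_lt_mul_of_pos_right (by linarith) h32C
    have key : ((a : ℝ) + b) * (32 * (c : ℝ) ^ 3) <
        (b : ℝ) * ((a : ℝ) ^ 2 * b + (b : ℝ) ^ 2 * a + (3 * (c : ℝ) + d) ^ 3) := by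
      linarith [q1, q2, mul_pos hBpos (mul_pos (pow_pos hApos 2) hBpos),
        mul_pos hBpos (mul_pos (pow_pos hBpos 2) hApos)]
    linarith [mul_lt_mul_of_pos_left key hBA2]
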